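/- Given x, y ∈ λ_p(A) with lower distributional function Φ_{x,y}(δ) = 0 for the backward shift B and some δ > 0, there exists a strictly increasing sequence (M_k) ⊂ ℕ such that simultaneously: (i) M_{k+1} − M_k ≥ 4^{M_k} for all k; (ii) ∑_{j=M_k}^∞ |y_j a_{j,k}|^p < 2^{-k} for all k; and (iii) lim_{k→∞} (1/M_k)·|{0 ≤ i < M_k : d(B^i(x), B^i(y)) ≥ δ}| = 1. -/

import Mathlib

open Filter Topology

noncomputable section

/-- A Köthe matrix: nonnegative entries, nondecreasing in the second index,
and for every row some positive entry. -/
def IsKotheMatrix (a : ℕ → ℕ → ℝ) : Prop :=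
  (∀ j k, 0 ≤ a j k) ∧ (∀ j k, a j k ≤ a j (k + 1)) ∧ (∀ j, ∃ k, 0 < a j k)

/-- The `k`-th seminorm on the Köthe sequence space `λ_p(A)` (for `1 ≤ p < ∞`). -/
noncomputable def kSeminorm (a : ℕ → ℕ → ℝ) (p : ℝ) (x : ℕ → ℝ) (k : ℕ) : ℝ :=
  (∑' j : ℕ, |x j * a j k| ^ p) ^ (1 / p)

/-- The Köthe sequence space `λ_p(A)` for `1 ≤ p < ∞`. -/
def lambdaP (a : ℕ → ℕ → ℝ) (p : ℝ) : Set (ℕ → ℝ) :=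
  {x | ∀ k : ℕ, Summable fun j : ℕ => |x j * a j k| ^ p}

/-- The standard translation-invariant Fréchet metric on `λ_p(A)`:
`d(x,y) = ∑_{n≥1} 2^{-n} ‖x-y‖_n / (1 + ‖x-y‖_n)`. -/
noncomputable def kDist (a : ℕ → ℕ → ℝ) (p : ℝ) (x y : ℕ → ℝ) : ℝ :=
  ∑' n : ℕ, (1 / 2 : ℝ) ^ (n + 1) *
    (kSeminorm a p (x - y) (n + 1) / (1 + kSeminorm a p (x - y) (n + 1)))

/-- The backward shift `B(x₁, x₂, x₃, …) = (x₂, x₃, x₄, …)` (0-based). -/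
def bShift (x : ℕ → ℝ) : ℕ → ℝ := fun j => x (j + 1)

/-- The front truncation `x(k, n) = (x_{k+1}, …, x_{k+n}, 0, 0, …)`. -/
def frontPart (x : ℕ → ℝ) (k n : ℕ) : ℕ → ℝ := fun i => if i < n then x (k + i) else 0

/-- The tail `x[k, n] = (0, …, 0 (n zeros), x_{k+n+1}, x_{k+n+2}, …)`. -/
def tailPart (x : ℕ → ℝ) (k n : ℕ) : ℕ → ℝ := fun i => if i < n then 0 else x (k + i)

open scoped Classical in
/-- `Φ^{(n)}_{x,y}(t) = |{0 ≤ i < n : d(f^i(x), f^i(y)) < t}|`. -/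
noncomputable def PhiN {X : Type*} (d : X → X → ℝ) (f : X → X) (x y : X) (n : ℕ) (t : ℝ) : ℕ :=
  ((Finset.range n).filter fun i => d (f^[i] x) (f^[i] y) < t).card

/-- The lower distributional function `Φ_{x,y}(t)`. -/
noncomputable def PhiLow {X : Type*} (d : X → X → ℝ) (f : X → X) (x y : X) (t : ℝ) : ℝ :=
  Filter.liminf (fun n : ℕ => (PhiN d f x y n t : ℝ) / n) Filter.atTop

/-- The upper distributional function `Φ*_{x,y}(t)`. -/
noncomputable def PhiUp {X : Type*} (d : X → X → ℝ) (f : X → X) (x y : X) (t : ℝ) : ℝ :=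
  Filter.limsup (fun n : ℕ => (PhiN d f x y n t : ℝ) / n) Filter.atTop

open scoped Classical in
/-- `|{0 ≤ i < n : d(f^i(x), f^i(y)) ≥ t}|`. -/
noncomputable def PhiNge {X : Type*} (d : X → X → ℝ) (f : X → X) (x y : X) (n : ℕ) (t : ℝ) : ℕ :=
  ((Finset.range n).filter fun i => t ≤ d (f^[i] x) (f^[i] y)).card

/-- from `Φ_{x,y}(δ) = 0` one extracts a strictly increasing `(M_k)` with
(i) `M_{k+1} - M_k ≥ 4^{M_k}`, (ii) `∑_{j=M_k}^∞ |y_j a_{j,k}|^p < 2^{-k}`, and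
(iii) `(1/M_k)|{0 ≤ i < M_k : d(Bⁱx, Bⁱy) ≥ δ}| → 1`. -/
theorem stmt_6 (a : ℕ → ℕ → ℝ) (p : ℝ) (hA : IsKotheMatrix a) (hp : 1 ≤ p)
    (hcont : ∀ n : ℕ, ∃ m : ℕ, n < m ∧ ∃ C : ℝ, ∀ j : ℕ, a j n ≤ C * a (j + 1) m)
    (x y : ℕ → ℝ) (hx : x ∈ lambdaP a p) (hy : y ∈ lambdaP a p)
    (δ : ℝ) (hδ : 0 < δ) (hΦ : PhiLow (kDist a p) bShift x y δ = 0) :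
    ∃ M : ℕ → ℕ, StrictMono M ∧
      (∀ k : ℕ, M k + 4 ^ (M k) ≤ M (k + 1)) ∧
      (∀ k : ℕ, ∑' j : ℕ, |y (M k + j) * a (M k + j) k| ^ p < (1 / 2 : ℝ) ^ k) ∧
      Tendsto (fun k : ℕ => (PhiNge (kDist a p) bShift x y (M k) δ : ℝ) / M k)
        atTop (𝓝 1) := by
  classical
  set D := kDist a p with hD
  set u : ℕ → ℝ := fun n => (PhiN D bShift x y n δ : ℝ) / n with hu
  -- u is bounded: 0 ≤ u n ≤ 1
  have hcard_le : ∀ n : ℕ, PhiN D bShift x y n δ ≤ n := by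
    intro n
    calc PhiN D bShift x y n δ ≤ (Finset.range n).card := Finset.card_filter_le _ _
      _ = n := Finset.card_range n
  have hu_le : ∀ n, u n ≤ 1 := by
    intro n
    rcases Nat.eq_zero_or_pos n with h0 | h0
    · simp [hu, h0]
    · have hn : (0 : ℝ) < n := by exact_mod_cast h0
      rw [hu]
      rw [div_le_one hn]
      exact_mod_cast hcard_le n
  have hcb : IsCoboundedUnder (· ≥ ·) (atTop : Filter ℕ) u := by
    have : Filter.IsBoundedUnder (· ≤ ·) (atTop : Filter ℕ) u :=
      Filter.isBoundedUnder_of ⟨1, fun n => hu_le n⟩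
    exact this.isCoboundedUnder_ge
  -- from liminf = 0, for any ε > 0 there are arbitrarily large m with u m < ε
  have hfreq : ∀ ε : ℝ, 0 < ε → ∀ N : ℕ, ∃ m, N ≤ m ∧ u m < ε := by
    intro ε hε N
    have hlt : Filter.liminf u atTop < ε := by
      have : Filter.liminf u atTop = 0 := hΦ
      rw [this]; exact hε
    have hf := Filter.frequently_lt_of_liminf_lt hcb hlt
    obtain ⟨m, hm1, hm2⟩ := ((hf.and_eventually (eventually_ge_atTop N)).exists)
    exact ⟨m, hm2, hm1⟩
  -- tails of the summable series go to 0
  have htail : ∀ k : ℕ, ∃ N : ℕ, ∀ m, N ≤ m →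
      ∑' j : ℕ, |y (m + j) * a (m + j) k| ^ p < (1 / 2 : ℝ) ^ k := by
    intro k
    have h0 : Tendsto (fun i : ℕ => ∑' j : ℕ, |y (j + i) * a (j + i) k| ^ p)
        atTop (𝓝 0) := tendsto_sum_nat_add (fun j => |y j * a j k| ^ p)
    have hev : ∀ᶠ i in (atTop : Filter ℕ),
        (∑' j : ℕ, |y (j + i) * a (j + i) k| ^ p) < (1 / 2 : ℝ) ^ k :=
      h0.eventually_lt_const (by positivity)
    obtain ⟨N, hN⟩ := eventually_atTop.mp hev
    refine ⟨N, fun m hm => ?_⟩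
    have := hN m hm
    have heq : (∑' j : ℕ, |y (m + j) * a (m + j) k| ^ p)
        = ∑' j : ℕ, |y (j + m) * a (j + m) k| ^ p :=
      tsum_congr fun j => by rw [Nat.add_comm]
    rw [heq]; exact this
  -- combined selection step
  have key : ∀ k N : ℕ, ∃ m : ℕ, N ≤ m ∧ 0 < m ∧ u m < 1 / ((k : ℝ) + 1) ∧
      ∑' j : ℕ, |y (m + j) * a (m + j) k| ^ p < (1 / 2 : ℝ) ^ k := by
    intro k N
    obtain ⟨N1, hN1⟩ := htail k
    obtain ⟨m, hm, hum⟩ := hfreq (1 / ((k : ℝ) + 1)) (by positivity) (max (max N N1) 1)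
    refine ⟨m, le_trans (le_max_left N N1) (le_trans (le_max_left _ 1) hm), ?_, hum, ?_⟩
    · exact lt_of_lt_of_le Nat.one_pos (le_trans (le_max_right _ 1) hm)
    · exact hN1 m (le_trans (le_max_right N N1) (le_trans (le_max_left _ 1) hm))
  choose g hg1 hg2 hg3 hg4 using key
  -- define M recursively
  set M : ℕ → ℕ := fun k => Nat.rec (g 0 0) (fun k ih => g (k + 1) (ih + 4 ^ ih)) k with hM
  have hMs : ∀ k : ℕ, M (k + 1) = g (k + 1) (M k + 4 ^ (M k)) := fun k => rfl
  have hstep : ∀ k : ℕ, M k + 4 ^ (M k) ≤ M (k + 1) := by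
    intro k; rw [hMs k]; exact hg1 _ _
  have hMpos : ∀ k : ℕ, 0 < M k := by
    intro k
    cases k with
    | zero => exact hg2 0 0
    | succ k => rw [hMs k]; exact hg2 _ _
  have hMu : ∀ k : ℕ, u (M k) < 1 / ((k : ℝ) + 1) := by
    intro k
    cases k with
    | zero => exact hg3 0 0
    | succ k => rw [hMs k]; exact hg3 _ _
  have hMtail : ∀ k : ℕ, ∑' j : ℕ, |y (M k + j) * a (M k + j) k| ^ p < (1 / 2 : ℝ) ^ k := by
    intro k
    cases k with
    | zero => exact hg4 0 0
    | succ k => rw [hMs k]; exact hg4 _ _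
  have hmono : StrictMono M := by
    apply strictMono_nat_of_lt_succ
    intro k
    calc M k < M k + 4 ^ (M k) := by
            have : 0 < 4 ^ (M k) := pow_pos (by norm_num) _
            omega
      _ ≤ M (k + 1) := hstep k
  -- PhiN + PhiNge = n
  have hsum : ∀ n : ℕ, PhiN D bShift x y n δ + PhiNge D bShift x y n δ = n := by
    intro n
    have h1 : PhiNge D bShift x y n δ
        = ((Finset.range n).filter fun i => ¬ (D (bShift^[i] x) (bShift^[i] y) < δ)).card := by
      rw [PhiNge]
      congr 1
      apply Finset.filter_congr
      intro i _
      simp [not_lt]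
    rw [PhiN, h1]
    rw [Finset.card_filter_add_card_filter_not]
    exact Finset.card_range n
  -- ratio identity
  have hratio : ∀ k : ℕ, (PhiNge D bShift x y (M k) δ : ℝ) / (M k) = 1 - u (M k) := by
    intro k
    have hn : ((M k : ℝ)) ≠ 0 := by
      have := hMpos k; positivity
    have hc : (PhiNge D bShift x y (M k) δ : ℝ) = (M k : ℝ) - (PhiN D bShift x y (M k) δ : ℝ) := by
      have := hsum (M k)
      have : ((PhiN D bShift x y (M k) δ : ℝ)) + (PhiNge D bShift x y (M k) δ : ℝ) = (M k : ℝ) := by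
        exact_mod_cast this
      linarith
    rw [hc, hu, sub_div, div_self hn]
  refine ⟨M, hmono, hstep, hMtail, ?_⟩
  -- squeeze
  have hlow : Tendsto (fun k : ℕ => 1 - 1 / ((k : ℝ) + 1)) atTop (𝓝 1) := by
    have h := tendsto_one_div_add_atTop_nhds_zero_nat (𝕜 := ℝ)
    have h2 : Tendsto (fun k : ℕ => (1 : ℝ) - 1 / ((k : ℝ) + 1)) atTop (𝓝 (1 - 0)) :=
      tendsto_const_nhds.sub h
    simpa using h2
  apply tendsto_of_tendsto_of_tendsto_of_le_of_le hlow tendsto_const_nhds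
  · intro k
    dsimp only
    rw [hratio k]
    have := hMu k
    linarith
  · intro k
    dsimp only
    rw [hratio k]
    have h0 : 0 ≤ u (M k) := by
      rw [hu]; positivity
    linarith
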